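/- Let P_t be the heat semigroup of a finite weighted graph satisfying CD(K,n) with K>0, n<∞. Then for all f with Γ(f) ≤ 1 pointwise and all t > 0, |Δ P_t f| ≤ √(Kn)·(e^{2Kt} − 1)^{-1/2} pointwise. -/

import Mathlib

open scoped ENNReal

structure WGraph (V : Type*) where
  w : V → V → ℝ
  m : V → ℝ
  symm : ∀ x y, w x y = w y x
  nonneg : ∀ x y, 0 ≤ w x y
  loopless : ∀ x, w x x = 0
  mpos : ∀ x, 0 < m x
  locfin : ∀ x, {y | w x y ≠ 0}.Finite

variable {V : Type*}

noncomputable def WGraph.lap (G : WGraph V) (f : V → ℝ) (x : V) : ℝ :=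
  (1 / G.m x) * ∑' y, G.w x y * (f y - f x)

noncomputable def WGraph.gamma (G : WGraph V) (f g : V → ℝ) (x : V) : ℝ :=
  (G.lap (f * g) x - f x * G.lap g x - g x * G.lap f x) / 2

noncomputable def WGraph.gamma2 (G : WGraph V) (f : V → ℝ) (x : V) : ℝ :=
  (G.lap (G.gamma f f) x - 2 * G.gamma f (G.lap f) x) / 2

noncomputable def WGraph.deg (G : WGraph V) (x : V) : ℝ :=
  (∑' y, G.w x y) / G.m x

noncomputable def WGraph.cdist (G : WGraph V) (x y : V) : ℕ∞ :=
  ⨅ (n : ℕ) (_ : ∃ c : ℕ → V, c 0 = x ∧ c n = y ∧ ∀ i < n, 0 < G.w (c i) (c (i+1))), (n : ℕ∞)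

noncomputable def WGraph.rho (G : WGraph V) (x y : V) : ℝ≥0∞ :=
  ⨆ (f : V → ℝ) (_ : ∀ z, G.gamma f f z ≤ 1), ENNReal.ofReal (f y - f x)

noncomputable def WGraph.diamd (G : WGraph V) : ℝ≥0∞ := ⨆ x, ⨆ y, (G.cdist x y : ℝ≥0∞)

noncomputable def WGraph.diamrho (G : WGraph V) : ℝ≥0∞ := ⨆ x, ⨆ y, G.rho x y

def WGraph.Connected (G : WGraph V) : Prop :=
  ∀ x y, ∃ (n : ℕ) (c : ℕ → V), c 0 = x ∧ c n = y ∧ ∀ i < n, 0 < G.w (c i) (c (i+1))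

variable [Fintype V]

/-- The graph Laplacian as a linear map on functions (finite vertex set). -/
noncomputable def WGraph.lapL (G : WGraph V) : (V → ℝ) →ₗ[ℝ] (V → ℝ) where
  toFun f := G.lap f
  map_add' f g := by
    funext x
    simp only [WGraph.lap, tsum_fintype, Pi.add_apply]
    rw [← mul_add, ← Finset.sum_add_distrib]
    congr 1
    exact Finset.sum_congr rfl fun y _ => by ring
  map_smul' c f := by
    funext x
    simp only [WGraph.lap, tsum_fintype, Pi.smul_apply, smul_eq_mul, RingHom.id_apply]
    rw [Finset.mul_sum, Finset.mul_sum, Finset.mul_sum]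
    exact Finset.sum_congr rfl fun y _ => by ring

/-- The heat semigroup P_t = e^{tΔ} of a finite weighted graph. -/
noncomputable def WGraph.heat (G : WGraph V) (t : ℝ) (f : V → ℝ) : V → ℝ :=
  NormedSpace.exp (t • (LinearMap.toContinuousLinearMap G.lapL)) f

set_option linter.unusedSectionVars false
set_option maxHeartbeats 1000000
set_option synthInstance.maxHeartbeats 400000
namespace WGraph
open NormedSpace
variable (G : WGraph V)

noncomputable def opA : (V → ℝ) →L[ℝ] (V → ℝ) := LinearMap.toContinuousLinearMap G.lapL

lemma opA_apply (f : V → ℝ) : G.opA f = G.lap f := rfl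

lemma heat_eq (t : ℝ) (f : V → ℝ) : G.heat t f = exp (t • G.opA) f := rfl

lemma lap_eq_sum (f : V → ℝ) (x : V) :
    G.lap f x = (1 / G.m x) * ∑ y, G.w x y * (f y - f x) := by
  rw [WGraph.lap, tsum_fintype]

lemma gamma_eq (f g : V → ℝ) (x : V) :
    G.gamma f g x = (∑ z, G.w x z * ((f z - f x) * (g z - g x))) / (2 * G.m x) := by
  have hm : G.m x ≠ 0 := (G.mpos x).ne'
  have key : ∑ z, G.w x z * (f z * g z - f x * g x)
      - f x * ∑ z, G.w x z * (g z - g x) - g x * ∑ z, G.w x z * (f z - f x)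
      = ∑ z, G.w x z * ((f z - f x) * (g z - g x)) := by
    rw [Finset.mul_sum, Finset.mul_sum, ← Finset.sum_sub_distrib, ← Finset.sum_sub_distrib]
    exact Finset.sum_congr rfl fun z _ => by ring
  simp only [WGraph.gamma, lap_eq_sum, Pi.mul_apply]
  have key' : ∑ z, G.w x z * (f z * g z - f x * g x)
      - f x * ∑ z, G.w x z * (g z - g x) - g x * ∑ z, G.w x z * (f z - f x)
      = ∑ z, G.w x z * (f z - f x) * (g z - g x) := by
    rw [key]; exact Finset.sum_congr rfl fun z _ => by ring
  field_simp
  linear_combination key'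

lemma gamma_nonneg (f : V → ℝ) (x : V) : 0 ≤ G.gamma f f x := by
  rw [gamma_eq]
  apply div_nonneg
  · exact Finset.sum_nonneg fun z _ => mul_nonneg (G.nonneg x z) (mul_self_nonneg _)
  · have := G.mpos x; linarith


lemma lap_one : G.lap (fun _ => (1:ℝ)) = fun _ => 0 := by
  funext x
  simp [lap_eq_sum]

noncomputable def cbd : ℝ := ∑ x, G.deg x

lemma deg_nonneg (x : V) : 0 ≤ G.deg x := by
  apply div_nonneg _ (G.mpos x).le
  rw [tsum_fintype]
  exact Finset.sum_nonneg fun y _ => G.nonneg x y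

lemma deg_le_cbd (x : V) : G.deg x ≤ G.cbd :=
  Finset.single_le_sum (fun i _ => G.deg_nonneg i) (Finset.mem_univ x)

noncomputable def opB : (V → ℝ) →L[ℝ] (V → ℝ) := G.opA + G.cbd • 1

lemma opB_apply (f : V → ℝ) (x : V) :
    G.opB f x = (1 / G.m x) * ∑ y, G.w x y * f y + (G.cbd - G.deg x) * f x := by
  have hm : G.m x ≠ 0 := (G.mpos x).ne'
  have hdeg : G.deg x = (∑ y, G.w x y) / G.m x := by rw [WGraph.deg, tsum_fintype]
  simp only [opB, ContinuousLinearMap.add_apply, ContinuousLinearMap.smul_apply,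
    ContinuousLinearMap.one_apply, Pi.add_apply, Pi.smul_apply, smul_eq_mul, opA_apply,
    lap_eq_sum, hdeg]
  have split : ∑ y, G.w x y * (f y - f x) = (∑ y, G.w x y * f y) - (∑ y, G.w x y) * f x := by
    rw [Finset.sum_mul, ← Finset.sum_sub_distrib]
    exact Finset.sum_congr rfl fun z _ => by ring
  rw [split]
  field_simp
  ring

lemma opB_nonneg (f : V → ℝ) (hf : ∀ y, 0 ≤ f y) (x : V) : 0 ≤ G.opB f x := by
  rw [opB_apply]
  have h1 : 0 ≤ (1 / G.m x) * ∑ y, G.w x y * f y := by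
    apply mul_nonneg (div_nonneg zero_le_one (G.mpos x).le)
    exact Finset.sum_nonneg fun y _ => mul_nonneg (G.nonneg x y) (hf y)
  have h2 : 0 ≤ (G.cbd - G.deg x) * f x :=
    mul_nonneg (sub_nonneg.mpr (G.deg_le_cbd x)) (hf x)
  linarith

lemma opB_pow_nonneg : ∀ (k : ℕ) (f : V → ℝ), (∀ y, 0 ≤ f y) → ∀ x, 0 ≤ (G.opB ^ k) f x := by
  intro k
  induction k with
  | zero => intro f hf x; simpa using hf x
  | succ j ih =>
    intro f hf x
    rw [pow_succ, ContinuousLinearMap.mul_apply]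
    exact ih (G.opB f) (fun y => G.opB_nonneg f hf y) x

lemma exp_opB_nonneg (s : ℝ) (hs : 0 ≤ s) (f : V → ℝ) (hf : ∀ y, 0 ≤ f y) (x : V) :
    0 ≤ exp (s • G.opB) f x := by
  have hsum := NormedSpace.expSeries_summable' (𝕂 := ℝ) (s • G.opB)
  set ev : ((V → ℝ) →L[ℝ] (V → ℝ)) →L[ℝ] ℝ :=
    (ContinuousLinearMap.proj x).comp (ContinuousLinearMap.apply ℝ (V → ℝ) f) with hev
  have hrw : exp (s • G.opB) f x = ev (exp (s • G.opB)) := rfl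
  rw [hrw, NormedSpace.exp_eq_tsum ℝ, ev.map_tsum hsum]
  apply tsum_nonneg
  intro k
  have : ev ((k.factorial⁻¹ : ℝ) • (s • G.opB) ^ k)
      = (k.factorial⁻¹ : ℝ) * (s ^ k * ((G.opB ^ k) f x)) := by
    rw [smul_pow, ev.map_smul, ev.map_smul]
    rfl
  rw [this]
  have h1 : (0:ℝ) ≤ (k.factorial⁻¹ : ℝ) := by positivity
  exact mul_nonneg h1 (mul_nonneg (pow_nonneg hs k) (G.opB_pow_nonneg k f hf x))

lemma heat_eq_smul (s : ℝ) (f : V → ℝ) :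
    G.heat s f = Real.exp (-(s * G.cbd)) • (exp (s • G.opB)) f := by
  have hc : s • G.opA = s • G.opB + (-(s * G.cbd)) • (1 : (V → ℝ) →L[ℝ] (V → ℝ)) := by
    rw [opB, smul_add, smul_smul]
    module
  have hcomm : Commute (s • G.opB) ((-(s * G.cbd)) • (1 : (V → ℝ) →L[ℝ] (V → ℝ))) := by
    show s • G.opB * ((-(s * G.cbd)) • 1) = ((-(s * G.cbd)) • 1) * (s • G.opB)
    rw [mul_smul_comm, mul_one, smul_mul_assoc, one_mul]
  have h1 : exp ((-(s * G.cbd)) • (1 : (V → ℝ) →L[ℝ] (V → ℝ)))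
      = Real.exp (-(s * G.cbd)) • 1 := by
    rw [← Algebra.algebraMap_eq_smul_one, ← NormedSpace.algebraMap_exp_comm,
      ← Real.exp_eq_exp_ℝ, Algebra.algebraMap_eq_smul_one]
  letI : NormedAlgebra ℚ ((V → ℝ) →L[ℝ] (V → ℝ)) := NormedAlgebra.restrictScalars ℚ ℝ _
  rw [heat_eq, hc, NormedSpace.exp_add_of_commute hcomm, h1, mul_smul_comm, mul_one,
    ContinuousLinearMap.smul_apply]

lemma heat_nonneg (s : ℝ) (hs : 0 ≤ s) (f : V → ℝ) (hf : ∀ y, 0 ≤ f y) (x : V) :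
    0 ≤ G.heat s f x := by
  rw [heat_eq_smul]
  have := G.exp_opB_nonneg s hs f hf x
  have h2 : (0:ℝ) ≤ Real.exp (-(s * G.cbd)) := (Real.exp_pos _).le
  simpa using mul_nonneg h2 this

lemma lapL_one : G.opA (fun _ => (1:ℝ)) = 0 := by
  rw [opA_apply, lap_one]; rfl

lemma heat_one (s : ℝ) : G.heat s (fun _ => (1:ℝ)) = fun _ => 1 := by
  have hsum := NormedSpace.expSeries_summable' (𝕂 := ℝ) (s • G.opA)
  have hrw : G.heat s (fun _ => (1:ℝ))
      = (ContinuousLinearMap.apply ℝ (V → ℝ) (fun _ => 1)) (exp (s • G.opA)) := rfl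
  rw [hrw, NormedSpace.exp_eq_tsum ℝ, ContinuousLinearMap.map_tsum _ hsum]
  rw [tsum_eq_single 0]
  · simp
  · intro k hk
    obtain ⟨j, rfl⟩ := Nat.exists_eq_succ_of_ne_zero hk
    have : ((s • G.opA) ^ (j + 1)) (fun _ => (1:ℝ)) = 0 := by
      rw [pow_succ, ContinuousLinearMap.mul_apply]
      have : (s • G.opA) (fun _ => (1:ℝ)) = 0 := by
        rw [ContinuousLinearMap.smul_apply, lapL_one, smul_zero]
      rw [this, map_zero]
    simp [this]

lemma heat_mono (s : ℝ) (hs : 0 ≤ s) (g h : V → ℝ) (hgh : ∀ y, g y ≤ h y) (x : V) :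
    G.heat s g x ≤ G.heat s h x := by
  have h0 : 0 ≤ G.heat s (h - g) x :=
    G.heat_nonneg s hs _ (fun y => sub_nonneg.mpr (hgh y)) x
  have hlin : G.heat s (h - g) = G.heat s h - G.heat s g := by
    simp only [heat_eq]; rw [map_sub]
  rw [hlin] at h0
  simpa using h0

lemma heat_le_one (s : ℝ) (hs : 0 ≤ s) (h : V → ℝ) (hh : ∀ y, h y ≤ 1) (x : V) :
    G.heat s h x ≤ 1 := by
  have := G.heat_mono s hs h (fun _ => 1) hh x
  rwa [heat_one] at this

lemma heat_zero (f : V → ℝ) : G.heat 0 f = f := by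
  rw [heat_eq, zero_smul, NormedSpace.exp_zero]; rfl

lemma heat_heat (s u : ℝ) (f : V → ℝ) : G.heat s (G.heat u f) = G.heat (s + u) f := by
  letI : NormedAlgebra ℚ ((V → ℝ) →L[ℝ] (V → ℝ)) := NormedAlgebra.restrictScalars ℚ ℝ _
  simp only [heat_eq]
  have : exp (s • G.opA) * exp (u • G.opA) = exp ((s + u) • G.opA) := by
    rw [add_smul, NormedSpace.exp_add_of_commute (by
      show s • G.opA * (u • G.opA) = u • G.opA * (s • G.opA)
      rw [mul_smul_comm, smul_mul_assoc, mul_smul_comm, smul_mul_assoc, smul_smul, smul_smul,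
        mul_comm] : Commute (s • G.opA) (u • G.opA))]
  rw [← this, ContinuousLinearMap.mul_apply]

lemma heat_lap_comm (s : ℝ) (f : V → ℝ) : G.heat s (G.opA f) = G.opA (G.heat s f) := by
  have hc0 : Commute (s • G.opA) G.opA := by
    show s • G.opA * G.opA = G.opA * (s • G.opA)
    rw [smul_mul_assoc, mul_smul_comm]
  have hcomm : Commute (exp (s • G.opA)) G.opA := Commute.exp_left hc0
  simp only [heat_eq]
  rw [← ContinuousLinearMap.mul_apply, ← ContinuousLinearMap.mul_apply, hcomm.eq]

lemma heat_sq_le (s : ℝ) (hs : 0 ≤ s) (h : V → ℝ) (x : V) :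
    (G.heat s h x) ^ 2 ≤ G.heat s (fun y => (h y) ^ 2) x := by
  set c := G.heat s h x with hc
  have hkey : (fun y => (h y - c) ^ 2)
      = (fun y => (h y) ^ 2) - (2 * c) • h + (c ^ 2) • (fun _ => (1:ℝ)) := by
    funext y
    simp only [Pi.add_apply, Pi.sub_apply, Pi.smul_apply, smul_eq_mul]
    ring
  have h0 : 0 ≤ G.heat s (fun y => (h y - c) ^ 2) x :=
    G.heat_nonneg s hs _ (fun y => sq_nonneg _) x
  rw [hkey] at h0
  have hlin : G.heat s ((fun y => (h y) ^ 2) - (2 * c) • h + (c ^ 2) • (fun _ => (1:ℝ)))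
      = G.heat s (fun y => (h y) ^ 2) - (2 * c) • G.heat s h + (c ^ 2) • G.heat s (fun _ => 1) := by
    simp only [heat_eq]
    rw [map_add, map_sub]
    rw [ContinuousLinearMap.map_smul, ContinuousLinearMap.map_smul]
  rw [hlin, heat_one] at h0
  simp only [Pi.add_apply, Pi.sub_apply, Pi.smul_apply, smul_eq_mul, mul_one, ← hc] at h0
  nlinarith [h0]


lemma heat_add (s : ℝ) (u v : V → ℝ) : G.heat s (u + v) = G.heat s u + G.heat s v := by
  simp only [heat_eq]; exact map_add _ u v

lemma heat_smul (s : ℝ) (r : ℝ) (u : V → ℝ) : G.heat s (r • u) = r • G.heat s u := by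
  simp only [heat_eq]; exact ContinuousLinearMap.map_smul _ r u

lemma hasDerivAt_heat_rev (f : V → ℝ) (t s₀ : ℝ) :
    HasDerivAt (fun s => G.heat (t - s) f) (-(G.opA (G.heat (t - s₀) f))) s₀ := by
  have hB : HasDerivAt (fun u : ℝ => exp (u • G.opA))
      (G.opA * exp ((t - s₀) • G.opA)) (t - s₀) :=
    hasDerivAt_exp_smul_const' G.opA (t - s₀)
  have hlin : HasDerivAt (fun s : ℝ => t - s) (-1) s₀ := by
    simpa using (hasDerivAt_id s₀).const_sub t
  have hcomp0 := HasDerivAt.scomp (h := fun s : ℝ => t - s) (x := s₀) hB hlin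
  have hcomp : HasDerivAt (fun s : ℝ => exp ((t - s) • G.opA))
      ((-1 : ℝ) • (G.opA * exp ((t - s₀) • G.opA))) s₀ := hcomp0
  have happ := hcomp.clm_apply (hasDerivAt_const s₀ f)
  have hval : ((-1 : ℝ) • (G.opA * exp ((t - s₀) • G.opA))) f + exp ((t - s₀) • G.opA) 0
      = -(G.opA (G.heat (t - s₀) f)) := by
    rw [map_zero, add_zero, ContinuousLinearMap.smul_apply, ContinuousLinearMap.mul_apply]
    rw [heat_eq, neg_one_smul]
  rw [hval] at happ
  exact happ

end WGraph

open NormedSpace in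
/-- on a finite weighted graph satisfying CD(K,n) with K>0, n<∞,
if Γ(f) ≤ 1 pointwise then |Δ P_t f| ≤ √(Kn)·(e^{2Kt}-1)^{-1/2} for t > 0. -/
theorem lap_heat_bound_of_CDn (G : WGraph V) (K n : ℝ) (hK : 0 < K) (hn : 0 < n)
    (hCD : ∀ (f : V → ℝ) (x : V),
      (1 / n) * (G.lap f x) ^ 2 + K * G.gamma f f x ≤ G.gamma2 f x)
    (f : V → ℝ) (hf : ∀ z, G.gamma f f z ≤ 1) (t : ℝ) (ht : 0 < t) (x : V) :
    |G.lap (G.heat t f) x| ≤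
      Real.sqrt (K * n) * (Real.sqrt (Real.exp (2 * K * t) - 1))⁻¹ := by
  classical
  have hKn : (0:ℝ) < K * n := mul_pos hK hn
  set C := (G.lap (G.heat t f) x) ^ 2 with hC
  set g : ℝ → V → ℝ := fun s => G.heat (t - s) f with hgdef
  set c : ℝ → V → ℝ := fun s => fun y => G.gamma (g s) (g s) y with hcdef
  set F : ℝ → ℝ := fun s => G.heat s (c s) x with hFdef
  set DF : ℝ → ℝ := fun s =>
    (exp (s • G.opA) * G.opA) (c s) x
      + exp (s • G.opA) (fun y => -2 * G.gamma (g s) (G.lap (g s)) y) x with hDFdef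
  set e : ℝ → ℝ := fun s => Real.exp (-(2 * K * s)) with hedef
  set ψ : ℝ → ℝ := fun s => e s * F s - (C / (K * n)) * (1 - e s) with hψdef
  set D : ℝ → ℝ := fun s => (e s * (-(2 * K))) * F s + e s * DF s
      - (C / (K * n)) * (0 - e s * (-(2 * K))) with hDdef
  have hgd : ∀ s₀ : ℝ, HasDerivAt g (-(G.opA (g s₀))) s₀ := fun s₀ =>
    G.hasDerivAt_heat_rev f t s₀
  have hz : ∀ (s₀ : ℝ) (z : V), HasDerivAt (fun s => g s z) (-(G.lap (g s₀) z)) s₀ := by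
    intro s₀ z
    have h1 := hasDerivAt_pi.1 (hgd s₀) z
    simpa [WGraph.opA_apply] using h1
  have hcd : ∀ s₀ : ℝ, HasDerivAt c (fun y => -2 * G.gamma (g s₀) (G.lap (g s₀)) y) s₀ := by
    intro s₀
    rw [hasDerivAt_pi]
    intro y
    have hrw : (fun s => c s y) = fun s =>
        (∑ z, G.w y z * ((g s z - g s y) * (g s z - g s y))) / (2 * G.m y) := by
      funext s
      exact G.gamma_eq (g s) (g s) y
    have hder : HasDerivAt
        (fun s => (∑ z, G.w y z * ((g s z - g s y) * (g s z - g s y))) / (2 * G.m y))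
        ((∑ z, G.w y z * ((-(G.lap (g s₀) z) - -(G.lap (g s₀) y)) * (g s₀ z - g s₀ y)
          + (g s₀ z - g s₀ y) * (-(G.lap (g s₀) z) - -(G.lap (g s₀) y)))) / (2 * G.m y)) s₀ := by
      apply HasDerivAt.div_const
      apply HasDerivAt.fun_sum
      intro z _
      exact (((hz s₀ z).sub (hz s₀ y)).mul ((hz s₀ z).sub (hz s₀ y))).const_mul (G.w y z)
    have hgoal : HasDerivAt (fun s => c s y)
        ((∑ z, G.w y z * ((-(G.lap (g s₀) z) - -(G.lap (g s₀) y)) * (g s₀ z - g s₀ y)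
          + (g s₀ z - g s₀ y) * (-(G.lap (g s₀) z) - -(G.lap (g s₀) y)))) / (2 * G.m y)) s₀ := by
      rw [hrw]; exact hder
    have hsum : ∑ z, G.w y z * ((-(G.lap (g s₀) z) - -(G.lap (g s₀) y)) * (g s₀ z - g s₀ y)
          + (g s₀ z - g s₀ y) * (-(G.lap (g s₀) z) - -(G.lap (g s₀) y)))
        = (-2) * ∑ z, G.w y z * ((g s₀ z - g s₀ y) * (G.lap (g s₀) z - G.lap (g s₀) y)) := by
      rw [Finset.mul_sum]
      exact Finset.sum_congr rfl fun z _ => by ring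
    have hval : -2 * G.gamma (g s₀) (G.lap (g s₀)) y
        = (∑ z, G.w y z * ((-(G.lap (g s₀) z) - -(G.lap (g s₀) y)) * (g s₀ z - g s₀ y)
          + (g s₀ z - g s₀ y) * (-(G.lap (g s₀) z) - -(G.lap (g s₀) y)))) / (2 * G.m y) := by
      rw [G.gamma_eq, hsum]
      ring
    simpa [hval] using hgoal
  have hFd : ∀ s₀ : ℝ, HasDerivAt F (DF s₀) s₀ := by
    intro s₀
    have hexp : HasDerivAt (fun s : ℝ => exp (s • G.opA))
        (exp (s₀ • G.opA) * G.opA) s₀ := hasDerivAt_exp_smul_const G.opA s₀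
    have hmain := hexp.clm_apply (hcd s₀)
    have hx := hasDerivAt_pi.1 hmain x
    exact hx
  have hψd : ∀ s₀ : ℝ, HasDerivAt ψ (D s₀) s₀ := by
    intro s₀
    have hl : HasDerivAt (fun s : ℝ => -(2 * K * s)) (-(2 * K)) s₀ := by
      rw [show (fun s : ℝ => -(2 * K * s)) = fun s => s * -(2 * K) from funext fun s => by ring]
      exact hasDerivAt_mul_const _
    have he : HasDerivAt e (e s₀ * (-(2 * K))) s₀ := hl.exp
    have h1 := he.mul (hFd s₀)
    have h2 := ((hasDerivAt_const s₀ (1:ℝ)).sub he).const_mul (C / (K * n))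
    exact h1.sub h2
  have hDnn : ∀ s₀ ∈ Set.Ioo (0:ℝ) t, 0 ≤ D s₀ := by
    intro s₀ hs₀
    have hs0 : (0:ℝ) ≤ s₀ := hs₀.1.le
    have h1 : DF s₀ = G.heat s₀
        (G.lap (c s₀) + fun y => -2 * G.gamma (g s₀) (G.lap (g s₀)) y) x := by
      rw [G.heat_add]
      rfl
    have h2 : ∀ y, (2 / n) * (G.lap (g s₀) y) ^ 2 + (2 * K) * c s₀ y
        ≤ (G.lap (c s₀) + fun y => -2 * G.gamma (g s₀) (G.lap (g s₀)) y) y := by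
      intro y
      have hcd2 := hCD (g s₀) y
      have hg2 : (G.lap (c s₀) + fun y => -2 * G.gamma (g s₀) (G.lap (g s₀)) y) y
          = 2 * G.gamma2 (g s₀) y := by
        simp only [Pi.add_apply, WGraph.gamma2]
        have hcc : c s₀ = G.gamma (g s₀) (g s₀) := rfl
        rw [hcc]
        ring
      rw [hg2]
      have hcy : c s₀ y = G.gamma (g s₀) (g s₀) y := rfl
      rw [hcy]
      have h2exp : 2 / n * G.lap (g s₀) y ^ 2 + 2 * K * G.gamma (g s₀) (g s₀) y
          = 2 * (1 / n * G.lap (g s₀) y ^ 2 + K * G.gamma (g s₀) (g s₀) y) := by ring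
      rw [h2exp]
      linarith [hcd2]
    have h3 := G.heat_mono s₀ hs0 _ _ h2 x
    have h4 : G.heat s₀ (fun y => (2 / n) * (G.lap (g s₀) y) ^ 2 + (2 * K) * c s₀ y) x
        = (2 / n) * G.heat s₀ (fun y => (G.lap (g s₀) y) ^ 2) x + (2 * K) * F s₀ := by
      have hfe : (fun y => (2 / n) * (G.lap (g s₀) y) ^ 2 + (2 * K) * c s₀ y)
          = (2 / n) • (fun y => (G.lap (g s₀) y) ^ 2) + (2 * K) • c s₀ := by
        funext y
        simp [Pi.add_apply, Pi.smul_apply, smul_eq_mul]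
      rw [hfe, G.heat_add, G.heat_smul, G.heat_smul]
      simp [hFdef]
    have h5 : C ≤ G.heat s₀ (fun y => (G.lap (g s₀) y) ^ 2) x := by
      have hj := G.heat_sq_le s₀ hs0 (G.lap (g s₀)) x
      have h7 : G.heat s₀ (g s₀) = G.heat t f := by
        show G.heat s₀ (G.heat (t - s₀) f) = _
        rw [G.heat_heat]
        congr 1
        ring
      have h6 := G.heat_lap_comm s₀ (g s₀)
      simp only [WGraph.opA_apply] at h6
      rw [h7] at h6
      rw [h6] at hj
      rw [hC]
      exact hj
    have h8 : (2 / n) * C + (2 * K) * F s₀ ≤ DF s₀ := by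
      rw [h1]
      have hstep : (2 / n) * C + (2 * K) * F s₀
          ≤ (2 / n) * G.heat s₀ (fun y => (G.lap (g s₀) y) ^ 2) x + (2 * K) * F s₀ := by
        gcongr
      calc (2 / n) * C + (2 * K) * F s₀
          ≤ (2 / n) * G.heat s₀ (fun y => (G.lap (g s₀) y) ^ 2) x + (2 * K) * F s₀ := hstep
        _ = G.heat s₀ (fun y => (2 / n) * (G.lap (g s₀) y) ^ 2 + (2 * K) * c s₀ y) x := h4.symm
        _ ≤ _ := h3
    have hid : (C / (K * n)) * (0 - e s₀ * (-(2 * K))) = (2 / n) * C * e s₀ := by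
      field_simp
      ring
    have hepos : 0 < e s₀ := Real.exp_pos _
    show 0 ≤ (e s₀ * (-(2 * K))) * F s₀ + e s₀ * DF s₀
      - (C / (K * n)) * (0 - e s₀ * (-(2 * K)))
    rw [hid]
    have hfact : (e s₀ * (-(2 * K))) * F s₀ + e s₀ * DF s₀ - (2 / n) * C * e s₀
        = e s₀ * (DF s₀ - ((2 / n) * C + (2 * K) * F s₀)) := by ring
    rw [hfact]
    exact mul_nonneg hepos.le (sub_nonneg.mpr h8)
  have hcont : Continuous ψ := by
    have hd : Differentiable ℝ ψ := fun s => (hψd s).differentiableAt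
    exact hd.continuous
  have hmono : MonotoneOn ψ (Set.Icc 0 t) := by
    apply monotoneOn_of_deriv_nonneg (convex_Icc 0 t) hcont.continuousOn
    · intro s hs
      exact ((hψd s).differentiableAt).differentiableWithinAt
    · intro s hs
      rw [interior_Icc] at hs
      rw [(hψd s).deriv]
      exact hDnn s hs
  have h0t : ψ 0 ≤ ψ t := hmono (Set.left_mem_Icc.2 ht.le) (Set.right_mem_Icc.2 ht.le) ht.le
  have hψ0 : 0 ≤ ψ 0 := by
    have he0 : e 0 = 1 := by
      show Real.exp (-(2 * K * 0)) = 1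
      simp
    have hg0 : g 0 = G.heat t f := by
      show G.heat (t - 0) f = G.heat t f
      rw [sub_zero]
    have hF0 : F 0 = G.gamma (G.heat t f) (G.heat t f) x := by
      show G.heat 0 (c 0) x = _
      rw [G.heat_zero]
      show G.gamma (g 0) (g 0) x = _
      rw [hg0]
    show 0 ≤ e 0 * F 0 - (C / (K * n)) * (1 - e 0)
    rw [he0, hF0]
    simpa using G.gamma_nonneg (G.heat t f) x
  have hψt : ψ t ≤ e t - (C / (K * n)) * (1 - e t) := by
    have hgt : g t = f := by
      show G.heat (t - t) f = f
      rw [sub_self, G.heat_zero]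
    have hFt : F t ≤ 1 := by
      apply G.heat_le_one t ht.le
      intro y
      show G.gamma (g t) (g t) y ≤ 1
      rw [hgt]
      exact hf y
    have hepos : 0 < e t := Real.exp_pos _
    have hef : e t * F t ≤ e t := by
      have h := mul_le_mul_of_nonneg_left hFt hepos.le
      rwa [mul_one] at h
    show e t * F t - (C / (K * n)) * (1 - e t) ≤ e t - (C / (K * n)) * (1 - e t)
    exact sub_le_sub_right hef _
  have hE1 : 1 < Real.exp (2 * K * t) := by
    rw [← Real.exp_zero]
    apply Real.exp_lt_exp.2
    positivity
  have hEt : e t = (Real.exp (2 * K * t))⁻¹ := by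
    show Real.exp (-(2 * K * t)) = _
    rw [Real.exp_neg]
  have hψchain := h0t.trans hψt
  clear_value g c F DF e ψ D C
  have key : (C / (K * n)) * (1 - e t) ≤ e t := by linarith [hψ0, hψchain]
  have hCle : C ≤ K * n / (Real.exp (2 * K * t) - 1) := by
    have hEpos : (0:ℝ) < Real.exp (2 * K * t) := Real.exp_pos _
    set E := Real.exp (2 * K * t) with hEdef
    rw [le_div_iff₀ (by linarith : (0:ℝ) < E - 1)]
    rw [hEt] at key
    calc C * (E - 1) = (C / (K * n) * ((E - 1) / E)) * ((K * n) * E) := by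
          field_simp
        _ ≤ E⁻¹ * ((K * n) * E) := by
          apply mul_le_mul_of_nonneg_right _ (by positivity)
          have h9 : (1:ℝ) - E⁻¹ = (E - 1) / E := by field_simp
          rw [← h9]
          exact key
        _ = K * n := by field_simp
  rw [← Real.sqrt_sq_eq_abs, ← hC]
  have hs1 : Real.sqrt C ≤ Real.sqrt (K * n / (Real.exp (2 * K * t) - 1)) :=
    Real.sqrt_le_sqrt hCle
  rw [Real.sqrt_div (by positivity : (0:ℝ) ≤ K * n), div_eq_mul_inv] at hs1
  exact hs1
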